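/- arXiv:2309.10666 — 3 statements merged into one kernel-verified Lean document; each statement's English description precedes it below -/
import Mathlib

section
/- Let N be a positive integer and ε > 0 with ε < W/(2N²), where W = b − a, and let X be the discrete random variable taking each value x_k = a + kW/N (k = 1, …, N) with probability 1/N. Then every partition (I_1, …, I_m) of (a, b] into consecutive half-open intervals such that Δ_X(I_j) ≤ ε for every j with P(X ∈ I_j) > 0 must satisfy m ≥ N. -/
open MeasureTheory

/-- `μ_{(u,v]} = E[X | X ∈ (u, v]]`. -/
noncomputable def intervalMean {Ω : Type*} [MeasurableSpace Ω]
    (P : Measure Ω) (X : Ω → ℝ) (u v : ℝ) : ℝ :=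
  (∫ ω in {ω | X ω ∈ Set.Ioc u v}, X ω ∂P) / (P {ω | X ω ∈ Set.Ioc u v}).toReal

/-- Per-interval approximation error
`Δ_X((u,v]) = E[1_{u < X ≤ μ_{(u,v]}} (μ_{(u,v]} − X)]`. -/
noncomputable def Delta {Ω : Type*} [MeasurableSpace Ω]
    (P : Measure Ω) (X : Ω → ℝ) (u v : ℝ) : ℝ :=
  ∫ ω in {ω | X ω ∈ Set.Ioc u (intervalMean P X u v)},
    (intervalMean P X u v - X ω) ∂P

lemma set_ae_eq_biUnion' {Ω : Type*} [MeasurableSpace Ω] (P : Measure Ω)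
    (Y : Ω → ℝ) (s : Finset ℝ) (hs : ∀ᵐ ω ∂P, Y ω ∈ s) (S : Set ℝ) [DecidablePred (· ∈ S)] :
    {ω | Y ω ∈ S} =ᵐ[P] ⋃ c ∈ s.filter (· ∈ S), {ω | Y ω = c} := by
  rw [Filter.eventuallyEq_set]
  filter_upwards [hs] with ω hω
  simp only [Set.mem_iUnion, Finset.mem_filter, Set.mem_setOf_eq, exists_prop]
  constructor
  · intro h; exact ⟨Y ω, ⟨hω, h⟩, rfl⟩
  · rintro ⟨c, ⟨-, hc⟩, rfl⟩; exact hc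

lemma meas_singleton' {Ω : Type*} [MeasurableSpace Ω] {Y : Ω → ℝ} (hY : Measurable Y)
    (c : ℝ) : MeasurableSet {ω | Y ω = c} :=
  hY (measurableSet_singleton c)

lemma meas_setOf_mem' {Ω : Type*} [MeasurableSpace Ω] (P : Measure Ω)
    {Y : Ω → ℝ} (hY : Measurable Y) {s : Finset ℝ} (hs : ∀ᵐ ω ∂P, Y ω ∈ s) (S : Set ℝ) [DecidablePred (· ∈ S)] :
    P {ω | Y ω ∈ S} = ∑ c ∈ s.filter (· ∈ S), P {ω | Y ω = c} := by
  rw [measure_congr (set_ae_eq_biUnion' P Y s hs S)]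
  rw [measure_biUnion_finset ?_ (fun c _ => meas_singleton' hY c)]
  intro c _ c' _ hne
  simp only [Function.onFun, Set.disjoint_left, Set.mem_setOf_eq]
  intro ω h1 h2; exact hne ((h1.symm.trans h2 : c = c'))

lemma integral_setOf_mem' {Ω : Type*} [MeasurableSpace Ω] (P : Measure Ω)
    {Y : Ω → ℝ} (hY : Measurable Y) (hYi : Integrable Y P)
    {s : Finset ℝ} (hs : ∀ᵐ ω ∂P, Y ω ∈ s) (S : Set ℝ) [DecidablePred (· ∈ S)] :
    ∫ ω in {ω | Y ω ∈ S}, Y ω ∂P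
      = ∑ c ∈ s.filter (· ∈ S), c * (P {ω | Y ω = c}).toReal := by
  rw [setIntegral_congr_set (set_ae_eq_biUnion' P Y s hs S)]
  rw [integral_biUnion_finset _ (fun c _ => meas_singleton' hY c) ?_
      (fun c _ => hYi.integrableOn)]
  · refine Finset.sum_congr rfl fun c hc => ?_
    rw [setIntegral_congr_fun (meas_singleton' hY c) (fun ω hω => hω)]
    rw [setIntegral_const, measureReal_def, smul_eq_mul, mul_comm]
  · intro c _ c' _ hne
    simp only [Function.onFun, Set.disjoint_left, Set.mem_setOf_eq]
    intro ω h1 h2; exact hne ((h1.symm.trans h2 : c = c'))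


lemma core_bound {Ω : Type*} [MeasurableSpace Ω]
    (P : Measure Ω) [IsProbabilityMeasure P]
    (X : Ω → ℝ) (hX : Integrable X P)
    (a b : ℝ) (hab : a < b) (N : ℕ) (hN : 0 < N)
    (hval : ∀ ω, ∃ k ∈ Finset.Icc 1 N, X ω = a + (k : ℝ) * (b - a) / N)
    (hprob : ∀ k ∈ Finset.Icc 1 N,
      P {ω | X ω = a + (k : ℝ) * (b - a) / N} = 1 / (N : ENNReal))
    (u v : ℝ) (k1 k2 : ℕ) (hk1 : k1 ∈ Finset.Icc 1 N) (hk2 : k2 ∈ Finset.Icc 1 N)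
    (hne : k1 ≠ k2)
    (h1 : a + (k1 : ℝ) * (b - a) / N ∈ Set.Ioc u v)
    (h2 : a + (k2 : ℝ) * (b - a) / N ∈ Set.Ioc u v) :
    0 < P {ω | X ω ∈ Set.Ioc u v} ∧ (b - a) / (2 * (N : ℝ) ^ 2) ≤ Delta P X u v := by
  have hNR : (0:ℝ) < N := Nat.cast_pos.2 hN
  have hW : (0:ℝ) < b - a := sub_pos.2 hab
  set d : ℝ := (b - a) / N with hd
  have hd0 : 0 < d := div_pos hW hNR
  set x : ℕ → ℝ := fun k => a + (k : ℝ) * (b - a) / N with hxdef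
  have hxmono : StrictMono x := by
    intro i j hij
    simp only [hxdef]
    have h : (i:ℝ) < j := Nat.cast_lt.2 hij
    have h2 : (i:ℝ) * (b-a) < (j:ℝ) * (b-a) := mul_lt_mul_of_pos_right h hW
    have h3 : (i:ℝ) * (b-a) / N < (j:ℝ) * (b-a) / N := by gcongr
    linarith
  -- measurable version
  obtain ⟨Y, hYsm, hXY⟩ := hX.1
  have hYm : Measurable Y := hYsm.measurable
  have hYi : Integrable Y P := hX.congr hXY
  set s : Finset ℝ := (Finset.Icc 1 N).image x with hsdef
  have hsae : ∀ᵐ ω ∂P, Y ω ∈ s := by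
    filter_upwards [hXY] with ω hω
    obtain ⟨k, hk, hXk⟩ := hval ω
    exact Finset.mem_image.2 ⟨k, hk, by rw [← hω, hXk]⟩
  have hset_ae : ∀ c : ℝ, {ω | X ω = c} =ᵐ[P] {ω | Y ω = c} := by
    intro c
    rw [Filter.eventuallyEq_set]
    filter_upwards [hXY] with ω hω
    simp [Set.mem_setOf_eq, hω]
  have hPY : ∀ c ∈ s, P {ω | Y ω = c} = 1 / (N : ENNReal) := by
    intro c hc
    obtain ⟨k, hk, rfl⟩ := Finset.mem_image.1 hc
    rw [← measure_congr (hset_ae (x k))]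
    exact hprob k hk
  -- the set of values in (u,v]
  set T : Finset ℝ := s.filter (· ∈ Set.Ioc u v) with hTdef
  have hx1s : x k1 ∈ s := Finset.mem_image.2 ⟨k1, hk1, rfl⟩
  have hx2s : x k2 ∈ s := Finset.mem_image.2 ⟨k2, hk2, rfl⟩
  have hx1T : x k1 ∈ T := Finset.mem_filter.2 ⟨hx1s, h1⟩
  have hx2T : x k2 ∈ T := Finset.mem_filter.2 ⟨hx2s, h2⟩
  have hTcard : 2 ≤ T.card := by
    refine Finset.one_lt_card.2 ⟨x k1, hx1T, x k2, hx2T, ?_⟩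
    exact fun h => hne (hxmono.injective h)
  set n : ℕ := T.card with hndef
  have hn0 : (0:ℝ) < n := by exact_mod_cast Nat.lt_of_lt_of_le Nat.zero_lt_two hTcard
  -- measure of the interval
  have hXYset : {ω | X ω ∈ Set.Ioc u v} =ᵐ[P] {ω | Y ω ∈ Set.Ioc u v} := by
    rw [Filter.eventuallyEq_set]
    filter_upwards [hXY] with ω hω
    simp [Set.mem_setOf_eq, hω]
  have hPIoc : P {ω | X ω ∈ Set.Ioc u v} = n * (1 / (N : ENNReal)) := by
    rw [measure_congr hXYset, meas_setOf_mem' P hYm hsae]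
    rw [Finset.sum_congr rfl (fun c hc => hPY c (Finset.mem_filter.1 hc).1)]
    rw [Finset.sum_const, nsmul_eq_mul]
  have hNE0 : (N : ENNReal) ≠ 0 := by exact_mod_cast hN.ne'
  have hNEtop : (N : ENNReal) ≠ ⊤ := ENNReal.natCast_ne_top N
  have hPpos : 0 < P {ω | X ω ∈ Set.Ioc u v} := by
    rw [hPIoc]
    apply ENNReal.mul_pos
    · exact_mod_cast (Nat.lt_of_lt_of_le Nat.zero_lt_two hTcard).ne'
    · simp [hNE0]
  have hPtoReal : (P {ω | X ω ∈ Set.Ioc u v}).toReal = n / N := by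
    rw [hPIoc, ENNReal.toReal_mul, one_div, ENNReal.toReal_inv]
    simp [div_eq_mul_inv]
  -- integral over the interval
  have hIint : ∫ ω in {ω | X ω ∈ Set.Ioc u v}, X ω ∂P = (∑ c ∈ T, c) / N := by
    rw [setIntegral_congr_set hXYset]
    rw [integral_congr_ae (ae_restrict_of_ae (hXY.mono fun ω h => h))]
    rw [integral_setOf_mem' P hYm hYi hsae]
    rw [Finset.sum_congr rfl (fun c hc => by
      rw [hPY c (Finset.mem_filter.1 hc).1, one_div, ENNReal.toReal_inv,
        ENNReal.toReal_natCast])]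
    rw [Finset.sum_div]
    exact Finset.sum_congr rfl fun c _ => by rw [div_eq_mul_inv]
  -- the conditional mean
  set μ : ℝ := intervalMean P X u v with hμdef
  have hμval : μ = (∑ c ∈ T, c) / n := by
    rw [hμdef, intervalMean, hIint, hPtoReal]
    field_simp
  -- minimum value in T
  have hTne : T.Nonempty := ⟨x k1, hx1T⟩
  set c0 : ℝ := T.min' hTne with hc0def
  have hc0T : c0 ∈ T := T.min'_mem hTne
  have hc0Ioc : c0 ∈ Set.Ioc u v := (Finset.mem_filter.1 hc0T).2
  -- spacing
  have hspace : ∀ c ∈ T, c ≠ c0 → c0 + d ≤ c := by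
    intro c hc hcne
    obtain ⟨k, hk, rfl⟩ := Finset.mem_image.1 (Finset.mem_filter.1 hc).1
    obtain ⟨k0, hk0, hk0e⟩ := Finset.mem_image.1 (Finset.mem_filter.1 hc0T).1
    have hle : c0 ≤ x k := T.min'_le _ hc
    have hlt : c0 < x k := lt_of_le_of_ne hle (fun h => hcne h.symm)
    rw [← hk0e] at hlt ⊢
    have hkk : k0 < k := hxmono.lt_iff_lt.1 hlt
    have h1k : (k0:ℝ) + 1 ≤ k := by exact_mod_cast hkk
    simp only [hxdef, hd]
    have h4 : ((k0:ℝ)+1)*(b-a)/N ≤ (k:ℝ)*(b-a)/N := by gcongr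
    have h5 : ((k0:ℝ)+1)*(b-a)/N = (k0:ℝ)*(b-a)/N + (b-a)/N := by ring
    linarith
  -- sum lower bound
  have hsum : (n - 1 : ℝ) * d ≤ ∑ c ∈ T, (c - c0) := by
    rw [← Finset.add_sum_erase T _ hc0T, sub_self, zero_add]
    have hcard : (T.erase c0).card = n - 1 := Finset.card_erase_of_mem hc0T
    have : ∑ c ∈ T.erase c0, d ≤ ∑ c ∈ T.erase c0, (c - c0) := by
      refine Finset.sum_le_sum fun c hc => ?_
      have := hspace c (Finset.mem_of_mem_erase hc) (Finset.ne_of_mem_erase hc)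
      linarith
    rw [Finset.sum_const, hcard, nsmul_eq_mul] at this
    have hn1 : ((n - 1 : ℕ) : ℝ) = (n : ℝ) - 1 := by
      have : 1 ≤ n := le_trans one_le_two hTcard
      push_cast [Nat.cast_sub this]; ring
    rw [hn1] at this; exact this
  have hsum2 : ∑ c ∈ T, (c - c0) = (∑ c ∈ T, c) - n * c0 := by
    rw [Finset.sum_sub_distrib, Finset.sum_const, nsmul_eq_mul]
  have hμc0 : c0 + d / 2 ≤ μ := by
    rw [hμval]
    rw [hsum2] at hsum
    have h2n : (n:ℝ) ≤ 2 * ((n:ℝ) - 1) := by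
      have : (2:ℝ) ≤ n := by exact_mod_cast hTcard
      linarith
    rw [le_div_iff₀ hn0]
    nlinarith
  have hc0μ : c0 ≤ μ := by nlinarith
  -- lower bound for Delta
  have hDset : {ω | X ω ∈ Set.Ioc u μ} =ᵐ[P] {ω | Y ω ∈ Set.Ioc u μ} := by
    rw [Filter.eventuallyEq_set]
    filter_upwards [hXY] with ω hω
    simp [Set.mem_setOf_eq, hω]
  have hDelta : Delta P X u v = ∫ ω in {ω | Y ω ∈ Set.Ioc u μ}, (μ - Y ω) ∂P := by
    rw [Delta, ← hμdef]
    rw [setIntegral_congr_set hDset]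
    exact integral_congr_ae (ae_restrict_of_ae (hXY.mono fun ω h => by show μ - X ω = μ - Y ω; rw [h]))
  have hAmeas : MeasurableSet {ω | Y ω ∈ Set.Ioc u μ} := hYm measurableSet_Ioc
  have hBsub : {ω | Y ω = c0} ⊆ {ω | Y ω ∈ Set.Ioc u μ} := by
    intro ω hω
    simp only [Set.mem_setOf_eq] at *
    exact ⟨hω ▸ hc0Ioc.1, hω ▸ hc0μ⟩
  have hIntOn : IntegrableOn (fun ω => μ - Y ω) {ω | Y ω ∈ Set.Ioc u μ} P :=
    ((integrable_const μ).sub hYi).integrableOn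
  have hmono : ∫ ω in {ω | Y ω = c0}, (μ - Y ω) ∂P
      ≤ ∫ ω in {ω | Y ω ∈ Set.Ioc u μ}, (μ - Y ω) ∂P := by
    refine setIntegral_mono_set hIntOn ?_ (HasSubset.Subset.eventuallyLE hBsub)
    filter_upwards [ae_restrict_mem hAmeas] with ω hω
    replace hω : Y ω ∈ Set.Ioc u μ := hω
    show (0:ℝ) ≤ μ - Y ω
    linarith [hω.2]
  have hBval : ∫ ω in {ω | Y ω = c0}, (μ - Y ω) ∂P = (μ - c0) / N := by
    have heq : ∫ ω in {ω | Y ω = c0}, (μ - Y ω) ∂P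
        = ∫ _ω in {ω | Y ω = c0}, (μ - c0) ∂P :=
      setIntegral_congr_fun (meas_singleton' hYm c0)
        (fun ω hω => by show μ - Y ω = μ - c0; rw [(hω : Y ω = c0)])
    rw [heq, setIntegral_const, measureReal_def, hPY c0 (Finset.mem_filter.1 hc0T).1, smul_eq_mul]
    rw [one_div, ENNReal.toReal_inv, ENNReal.toReal_natCast]
    ring
  refine ⟨hPpos, ?_⟩
  have hfinal : (μ - c0) / N ≤ Delta P X u v := by
    rw [hDelta]; rw [hBval] at hmono; exact hmono
  have : (b - a) / (2 * (N:ℝ)^2) ≤ (μ - c0) / N := by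
    rw [div_le_div_iff₀ (by positivity) hNR]
    have hdm : d / 2 ≤ μ - c0 := by linarith
    have : d = (b-a)/N := hd
    rw [this] at hdm
    have h1 : (b - a) / N / 2 * N ≤ (μ - c0) * N :=
      mul_le_mul_of_nonneg_right (by linarith) hNR.le
    calc (b-a) * N = ((b-a)/N/2) * N * (2 * N) := by field_simp
    _ ≤ (μ - c0) * N * (2*N) := by nlinarith
    _ = (μ - c0) * (2 * N^2) := by ring
  linarith

/-- Let `N ≥ 1`, `0 < ε < W/(2N²)` with `W = b − a`, and let `X` be
the discrete random variable taking each value `x_k = a + k W/N` (`k = 1,…,N`) with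
probability `1/N`. Then every partition `(I_1,…,I_m)` of `(a, b]` into consecutive
half-open intervals `I_j = (r (j−1), r j]` with `Δ_X(I_j) ≤ ε` for every `j` with
`P(X ∈ I_j) > 0` must satisfy `m ≥ N`. -/
theorem lower_bound_discrete_partition {Ω : Type*} [MeasurableSpace Ω]
    (P : Measure Ω) [IsProbabilityMeasure P]
    (X : Ω → ℝ) (hX : Integrable X P)
    (a b : ℝ) (hab : a < b)
    (N : ℕ) (hN : 0 < N)
    (ε : ℝ) (hε : 0 < ε) (hεW : ε < (b - a) / (2 * (N : ℝ) ^ 2))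
    (hval : ∀ ω, ∃ k ∈ Finset.Icc 1 N, X ω = a + (k : ℝ) * (b - a) / N)
    (hprob : ∀ k ∈ Finset.Icc 1 N,
      P {ω | X ω = a + (k : ℝ) * (b - a) / N} = 1 / (N : ENNReal))
    (m : ℕ) (hm : 1 ≤ m)
    (r : ℕ → ℝ) (hr0 : r 0 = a) (hrm : r m = b)
    (hrmono : ∀ i < m, r i < r (i + 1))
    (hrerr : ∀ j, 1 ≤ j → j ≤ m →
      0 < P {ω | X ω ∈ Set.Ioc (r (j - 1)) (r j)} →
      Delta P X (r (j - 1)) (r j) ≤ ε) :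
    N ≤ m := by
  classical
  by_contra hlt
  push_neg at hlt
  have hNR : (0:ℝ) < N := Nat.cast_pos.2 hN
  have hW : (0:ℝ) < b - a := sub_pos.2 hab
  set x : ℕ → ℝ := fun k => a + (k : ℝ) * (b - a) / N with hxdef
  -- each point x k (1 ≤ k ≤ N) lies in (a, b]
  have hxmem : ∀ k ∈ Finset.Icc 1 N, a < x k ∧ x k ≤ b := by
    intro k hk
    obtain ⟨hk1, hkN⟩ := Finset.mem_Icc.1 hk
    constructor
    · have : (0:ℝ) < (k:ℝ) * (b - a) / N := by
        apply div_pos (mul_pos _ hW) hNR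
        exact_mod_cast hk1
      simp only [hxdef]; linarith
    · have hkle : (k:ℝ) ≤ N := Nat.cast_le.2 hkN
      have : (k:ℝ) * (b - a) / N ≤ (N:ℝ) * (b - a) / N := by gcongr
      have h2 : (N:ℝ) * (b - a) / N = b - a := by field_simp
      simp only [hxdef]; linarith
  -- coverage
  have cover : ∀ t : ℝ, a < t → t ≤ b →
      ∃ j, 1 ≤ j ∧ j ≤ m ∧ r (j-1) < t ∧ t ≤ r j := by
    intro t hat htb
    have hex : ∃ j, t ≤ r j := ⟨m, hrm ▸ htb⟩
    set j := Nat.find hex with hjdef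
    have hj : t ≤ r j := Nat.find_spec hex
    have hjm : j ≤ m := Nat.find_min' hex (hrm ▸ htb)
    have hj1 : 1 ≤ j := by
      by_contra h0
      have : j = 0 := by omega
      rw [this, hr0] at hj
      linarith
    have hnot : ¬ t ≤ r (j-1) := Nat.find_min hex (by omega)
    exact ⟨j, hj1, hjm, lt_of_not_ge hnot, hj⟩
  -- define the assignment k ↦ j
  set f : ℕ → ℕ := fun k =>
    if h : ∃ j, 1 ≤ j ∧ j ≤ m ∧ r (j-1) < x k ∧ x k ≤ r j then h.choose else 1
    with hfdef
  have hfspec : ∀ k ∈ Finset.Icc 1 N,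
      1 ≤ f k ∧ f k ≤ m ∧ x k ∈ Set.Ioc (r (f k - 1)) (r (f k)) := by
    intro k hk
    obtain ⟨h1, h2⟩ := hxmem k hk
    have h : ∃ j, 1 ≤ j ∧ j ≤ m ∧ r (j-1) < x k ∧ x k ≤ r j := cover _ h1 h2
    simp only [hfdef, dif_pos h]
    obtain ⟨hj1, hjm, hlt', hle'⟩ := h.choose_spec
    exact ⟨hj1, hjm, hlt', hle'⟩
  have hmaps : ∀ k ∈ Finset.Icc 1 N, f k ∈ Finset.Icc 1 m := by
    intro k hk
    obtain ⟨h1, h2, _⟩ := hfspec k hk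
    exact Finset.mem_Icc.2 ⟨h1, h2⟩
  have hcard : (Finset.Icc 1 m).card < (Finset.Icc 1 N).card := by
    simp [Nat.card_Icc]; omega
  obtain ⟨k1, hk1, k2, hk2, hne, hfeq⟩ :=
    Finset.exists_ne_map_eq_of_card_lt_of_maps_to hcard hmaps
  obtain ⟨hf1, hf2, hmem1⟩ := hfspec k1 hk1
  obtain ⟨_, _, hmem2⟩ := hfspec k2 hk2
  rw [hfeq] at hmem1
  set j := f k2 with hjdef
  have hcore := core_bound P X hX a b hab N hN hval hprob
    (r (j-1)) (r j) k1 k2 hk1 hk2 hne hmem1 hmem2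
  have hD := hrerr j (hfeq ▸ hf1) (hfeq ▸ hf2) hcore.1
  linarith [hcore.2]
end

section
/- Let N be a positive integer, ε > 0 with ε < W/(2N²) where W = b − a, and 0 < w < W/N. Let X be the continuous random variable whose law has density p(x) = 1/(Nw) on the union ⋃_{k=1}^{N} (x_k − w, x_k] with x_k = a + kW/N, and p(x) = 0 elsewhere. Then every half-open interval I = (a', b'] ⊆ (a, b] with P(X ∈ I) ≥ 2/N satisfies Δ_X(I) > ε. -/
open MeasureTheory

/-- The density `p(x) = 1/(Nw)` on `⋃_{k=1}^{N} (x_k − w, x_k]` with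
`x_k = a + k (b−a)/N`, and `p(x) = 0` elsewhere. -/
noncomputable def combDensity (a b : ℝ) (N : ℕ) (w : ℝ) : ℝ → ℝ :=
  Set.indicator
    (⋃ k ∈ Finset.Icc 1 N,
      Set.Ioc (a + (k : ℝ) * (b - a) / N - w) (a + (k : ℝ) * (b - a) / N))
    (fun _ => 1 / ((N : ℝ) * w))

/-- Periodic comb majorant: value `v` on the periodic union of teeth. -/
noncomputable def combG (a L w v : ℝ) : ℝ → ℝ :=
  Set.indicator {x : ℝ | Int.fract ((a - x) / L) * L < w} (fun _ => v)

lemma combG_set_measurable (a L w : ℝ) :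
    MeasurableSet {x : ℝ | Int.fract ((a - x) / L) * L < w} := by
  have h : Measurable fun x : ℝ => Int.fract ((a - x) / L) * L :=
    (((measurable_const.sub measurable_id).div_const L).fract).mul_const L
  exact measurableSet_lt h measurable_const

lemma combG_measurable (a L w v : ℝ) : Measurable (combG a L w v) :=
  measurable_const.indicator (combG_set_measurable a L w)

lemma combG_nonneg (a L w : ℝ) {v : ℝ} (hv : 0 ≤ v) (x : ℝ) : 0 ≤ combG a L w v x := by
  unfold combG
  by_cases h : x ∈ {x : ℝ | Int.fract ((a - x) / L) * L < w}
  · rw [Set.indicator_of_mem h]; exact hv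
  · rw [Set.indicator_of_notMem h]

lemma combG_le (a L w : ℝ) {v : ℝ} (hv : 0 ≤ v) (x : ℝ) : combG a L w v x ≤ v := by
  unfold combG
  by_cases h : x ∈ {x : ℝ | Int.fract ((a - x) / L) * L < w}
  · rw [Set.indicator_of_mem h]
  · rw [Set.indicator_of_notMem h]; exact hv

lemma combG_periodic (a w v : ℝ) {L : ℝ} (hL : L ≠ 0) :
    Function.Periodic (combG a L w v) L := by
  intro x
  unfold combG
  have h : (a - (x + L)) / L = (a - x) / L - (1 : ℤ) := by
    push_cast
    field_simp
    ring
  simp only [Set.indicator, Set.mem_setOf_eq, h, Int.fract_sub_intCast]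

lemma combG_intervalIntegrable (a L w : ℝ) {v : ℝ} (hv : 0 ≤ v) (u u' : ℝ) :
    IntervalIntegrable (combG a L w v) volume u u' := by
  apply IntervalIntegrable.mono_fun' (g := fun _ => v)
  · exact intervalIntegrable_const
  · exact (combG_measurable a L w v).aestronglyMeasurable
  · filter_upwards with x
    rw [Real.norm_eq_abs, abs_of_nonneg (combG_nonneg a L w hv x)]
    exact combG_le a L w hv x

/-- membership in the periodic teeth set from membership in an integer tooth -/
lemma combG_mem_tooth {a L w : ℝ} (hL : 0 < L) (hw : 0 < w) (hwL : w ≤ L)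
    (k : ℤ) {x : ℝ} (hx : x ∈ Set.Ioc (a + k * L - w) (a + k * L)) :
    Int.fract ((a - x) / L) * L < w := by
  obtain ⟨h1, h2⟩ := hx
  set y : ℝ := (a - x) / L + k with hy
  have hyL : y * L = a - x + k * L := by
    rw [hy, add_mul, div_mul_cancel₀ _ hL.ne']
  have h0 : 0 ≤ y * L := by rw [hyL]; linarith
  have h1' : y * L < w := by rw [hyL]; linarith
  have hy0 : 0 ≤ y := by nlinarith
  have hy1 : y < 1 := by
    by_contra hcon
    push_neg at hcon
    have : L ≤ y * L := le_mul_of_one_le_left hL.le hcon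
    linarith
  have hfr : Int.fract ((a - x) / L) = y := by
    have h2' : (a - x) / L = y - k := by rw [hy]; ring
    rw [h2', Int.fract_sub_intCast, Int.fract_eq_self.2 ⟨hy0, hy1⟩]
  rw [hfr]; exact h1'

lemma combDensity_le_combG {a b : ℝ} {N : ℕ} {w : ℝ}
    (hw : 0 < w) (hL : 0 < (b - a) / N) (hwL : w ≤ (b - a) / N) (x : ℝ) :
    combDensity a b N w x ≤ combG a ((b - a) / N) w (1 / ((N : ℝ) * w)) x := by
  set L := (b - a) / N with hLdef
  unfold combDensity
  set S := ⋃ k ∈ Finset.Icc 1 N,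
      Set.Ioc (a + (k : ℝ) * (b - a) / N - w) (a + (k : ℝ) * (b - a) / N) with hS
  by_cases h : x ∈ S
  · rw [Set.indicator_of_mem h]
    simp only [hS, Set.mem_iUnion] at h
    obtain ⟨k, hk, hxk⟩ := h
    have hmem : x ∈ Set.Ioc (a + (k : ℤ) * L - w) (a + (k : ℤ) * L) := by
      have : (k : ℝ) * (b - a) / N = (k : ℤ) * L := by
        rw [hLdef]; push_cast; ring
      rwa [this] at hxk
    have := combG_mem_tooth hL hw hwL (k : ℤ) hmem
    have hmem2 : x ∈ {x : ℝ | Int.fract ((a - x) / L) * L < w} := this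
    unfold combG
    rw [Set.indicator_of_mem hmem2]
  · rw [Set.indicator_of_notMem h]
    exact combG_nonneg a L w (one_div_nonneg.mpr (mul_nonneg (Nat.cast_nonneg N) hw.le)) x

/-- one-period integral of the comb majorant -/
lemma combG_integral_period {a L w : ℝ} (v : ℝ) (hL : 0 < L) (hw : 0 < w) (hwL : w ≤ L)
    (s : ℝ) : ∫ x in s..(s + L), combG a L w v x = v * w := by
  have hper := combG_periodic a w v hL.ne'
  have hbase : ∫ x in (a - L)..((a - L) + L), combG a L w v x = v * w := by
    have he : (a - L) + L = a := by ring
    rw [he]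
    rw [intervalIntegral.integral_of_le (by linarith : a - L ≤ a)]
    rw [show combG a L w v = Set.indicator {x : ℝ | Int.fract ((a - x) / L) * L < w}
      (fun _ => v) from rfl]
    rw [MeasureTheory.setIntegral_indicator (combG_set_measurable a L w)]
    have hseteq : Set.Ioc (a - L) a ∩ {x : ℝ | Int.fract ((a - x) / L) * L < w}
        = Set.Ioc (a - w) a := by
      ext x
      simp only [Set.mem_inter_iff, Set.mem_Ioc, Set.mem_setOf_eq]
      constructor
      · rintro ⟨⟨hx1, hx2⟩, hx3⟩
        refine ⟨?_, hx2⟩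
        have hy0 : 0 ≤ (a - x) / L := div_nonneg (by linarith) hL.le
        have hy1 : (a - x) / L < 1 := by
          rw [div_lt_one hL]; linarith
        rw [Int.fract_eq_self.2 ⟨hy0, hy1⟩] at hx3
        have : a - x < w := by
          have := hx3
          rw [div_mul_cancel₀ _ hL.ne'] at this
          linarith
        linarith
      · rintro ⟨hx1, hx2⟩
        have hax : 0 ≤ a - x := by linarith
        refine ⟨⟨by linarith, hx2⟩, ?_⟩
        have hy0 : 0 ≤ (a - x) / L := div_nonneg (by linarith) hL.le
        have hy1 : (a - x) / L < 1 := by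
          rw [div_lt_one hL]; linarith
        rw [Int.fract_eq_self.2 ⟨hy0, hy1⟩, div_mul_cancel₀ _ hL.ne']
        linarith
    rw [hseteq, MeasureTheory.setIntegral_const]
    rw [measureReal_def, Real.volume_Ioc]
    rw [ENNReal.toReal_ofReal (by linarith)]
    simp [smul_eq_mul]
    ring
  rw [hper.intervalIntegral_add_eq s (a - L), hbase]

/-- Let `N ≥ 1`, `0 < ε < W/(2N²)` with `W = b − a`, `0 < w < W/N`,
and let `X` be the continuous random variable whose law has density `combDensity a b N w`
with respect to Lebesgue measure. Then every half-open interval `I = (a', b'] ⊆ (a, b]`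
with `P(X ∈ I) ≥ 2/N` satisfies `Δ_X(I) > ε`. -/
theorem lower_bound_continuous_interval {Ω : Type*} [MeasurableSpace Ω]
    (P : Measure Ω) [IsProbabilityMeasure P]
    (X : Ω → ℝ) (hX : Integrable X P) (hXm : Measurable X)
    (a b : ℝ) (hab : a < b)
    (N : ℕ) (hN : 0 < N)
    (ε : ℝ) (hε : 0 < ε) (hεW : ε < (b - a) / (2 * (N : ℝ) ^ 2))
    (w : ℝ) (hw : 0 < w) (hwN : w < (b - a) / N)
    (hlaw : P.map X =
      volume.withDensity (fun x => ENNReal.ofReal (combDensity a b N w x))) :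
    ∀ a' b' : ℝ, a ≤ a' → b' ≤ b →
      2 / (N : ℝ) ≤ (P {ω | X ω ∈ Set.Ioc a' b'}).toReal →
      ε < Delta P X a' b' := by
  intro a' b' ha' hb' hp
  have hNR : (0:ℝ) < N := Nat.cast_pos.mpr hN
  set L : ℝ := (b - a) / N with hLdef
  have hL0 : 0 < L := div_pos (by linarith) hNR
  set v : ℝ := 1 / ((N : ℝ) * w) with hvdef
  have hv0 : 0 < v := by rw [hvdef]; positivity
  have hvw : v * w = 1 / (N : ℝ) := by
    rw [hvdef]
    field_simp
  set G : ℝ → ℝ := combG a L w v with hGdef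
  set ν : Measure ℝ := P.map X with hνdef
  set I : Set ℝ := Set.Ioc a' b' with hIdef
  have hIm : MeasurableSet I := measurableSet_Ioc
  have hmap : ∀ s : Set ℝ, MeasurableSet s → ν s = P (X ⁻¹' s) := fun s hs =>
    Measure.map_apply hXm hs
  have hνI_le : ν I ≤ 1 := by rw [hmap I hIm]; exact prob_le_one
  have hνI_lt : ν I < ⊤ := lt_of_le_of_lt hνI_le (by norm_num)
  have hνI_ne : ν I ≠ ⊤ := hνI_lt.ne
  have hpre : {ω | X ω ∈ I} = X ⁻¹' I := rfl
  have hp2 : 2 / (N : ℝ) ≤ (ν I).toReal := by rw [hmap I hIm]; exact hp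
  have hpI : ENNReal.ofReal (2 / (N : ℝ)) ≤ ν I := ENNReal.ofReal_le_of_le_toReal hp2
  set p : ℝ := (ν I).toReal with hpdef
  have hp0 : 0 < p := lt_of_lt_of_le (by positivity) hp2
  -- integrability of identity on I
  have hIntC : ∀ r : ℝ, IntegrableOn (fun _ : ℝ => r) I ν := fun r =>
    integrableOn_const hνI_ne
  have hIntId : IntegrableOn (fun x : ℝ => x) I ν := by
    apply Integrable.mono' (g := fun _ => max |a'| |b'|) (hIntC _)
      measurable_id.aestronglyMeasurable
    refine (ae_restrict_iff' hIm).2 (Filter.Eventually.of_forall fun x hx => ?_)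
    simp only [id_eq]
    rw [Real.norm_eq_abs, abs_le]
    obtain ⟨h1, h2⟩ := hx
    constructor
    · have h3 := neg_abs_le a'
      have h4 := le_max_left |a'| |b'|
      linarith
    · have h3 := le_abs_self b'
      have h4 := le_max_right |a'| |b'|
      linarith
  have hnum : ∫ ω in {ω | X ω ∈ I}, X ω ∂P = ∫ x in I, x ∂ν := by
    rw [hpre]
    exact (setIntegral_map hIm measurable_id.aestronglyMeasurable hXm.aemeasurable).symm
  set c : ℝ := intervalMean P X a' b' with hcdef
  have hcEq : c = (∫ x in I, x ∂ν) / p := by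
    rw [hcdef]; unfold intervalMean
    rw [hnum, hpdef, hmap I hIm]
    rfl
  have hIub : ∫ x in I, x ∂ν ≤ b' * p := by
    have h1 : ∫ x in I, x ∂ν ≤ ∫ x in I, b' ∂ν :=
      setIntegral_mono_on hIntId (hIntC b') hIm fun x hx => hx.2
    rw [setIntegral_const] at h1
    rw [smul_eq_mul] at h1
    rw [measureReal_def, ← hpdef] at h1
    linarith
  have hIlb : a' * p ≤ ∫ x in I, x ∂ν := by
    have h1 : ∫ x in I, a' ∂ν ≤ ∫ x in I, x ∂ν :=
      setIntegral_mono_on (hIntC a') hIntId hIm fun x hx => hx.1.le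
    rw [setIntegral_const, smul_eq_mul] at h1
    rw [measureReal_def, ← hpdef] at h1
    linarith
  have hca : a' ≤ c := by rw [hcEq, le_div_iff₀ hp0]; linarith
  have hcb : c ≤ b' := by rw [hcEq, div_le_iff₀ hp0]; linarith
  have hnum_eq : ∫ x in I, x ∂ν = c * p := by rw [hcEq]; field_simp
  have hDset : MeasurableSet (Set.Ioc a' c) := measurableSet_Ioc
  have hDelta : Delta P X a' b' = ∫ x in Set.Ioc a' c, (c - x) ∂ν := by
    unfold Delta
    rw [← hcdef]
    rw [show {ω | X ω ∈ Set.Ioc a' c} = X ⁻¹' (Set.Ioc a' c) from rfl]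
    exact (setIntegral_map hDset
      ((measurable_const.sub measurable_id).aestronglyMeasurable)
      hXm.aemeasurable).symm
  have hIntSub : IntegrableOn (fun x : ℝ => c - x) I ν := (hIntC c).sub hIntId
  have hzero : ∫ x in I, (c - x) ∂ν = 0 := by
    rw [integral_sub (hIntC c) hIntId, setIntegral_const, smul_eq_mul, hnum_eq, measureReal_def, ← hpdef]
    ring
  have hsplitset : Set.Ioc a' c ∪ Set.Ioc c b' = I := Set.Ioc_union_Ioc_eq_Ioc hca hcb
  have hdisj : Disjoint (Set.Ioc a' c) (Set.Ioc c b') := Set.Ioc_disjoint_Ioc_of_le le_rfl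
  have hsub1 : Set.Ioc a' c ⊆ I := by rw [← hsplitset]; exact Set.subset_union_left
  have hsub2 : Set.Ioc c b' ⊆ I := by rw [← hsplitset]; exact Set.subset_union_right
  have hadd : ∫ x in Set.Ioc a' c, (c - x) ∂ν + ∫ x in Set.Ioc c b', (c - x) ∂ν = 0 := by
    rw [← setIntegral_union hdisj measurableSet_Ioc (hIntSub.mono_set hsub1)
      (hIntSub.mono_set hsub2), hsplitset, hzero]
  have hIabs : IntegrableOn (fun x : ℝ => |x - c|) I ν := (hIntId.sub (hIntC c)).abs
  have h2D : ∫ x in I, |x - c| ∂ν = 2 * Delta P X a' b' := by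
    rw [hDelta, ← hsplitset,
      setIntegral_union hdisj measurableSet_Ioc
        ((hIabs.mono_set (hsplitset ▸ hsub1)).mono_set (fun x hx => hx))
        ((hIabs.mono_set (hsplitset ▸ hsub2)).mono_set (fun x hx => hx))]
    have e1 : ∫ x in Set.Ioc a' c, |x - c| ∂ν = ∫ x in Set.Ioc a' c, (c - x) ∂ν := by
      refine setIntegral_congr_fun measurableSet_Ioc fun x hx => ?_
      rw [abs_of_nonpos (by linarith [hx.2] : x - c ≤ 0)]; ring
    have e2 : ∫ x in Set.Ioc c b', |x - c| ∂ν = - ∫ x in Set.Ioc c b', (c - x) ∂ν := by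
      rw [← integral_neg]
      refine setIntegral_congr_fun measurableSet_Ioc fun x hx => ?_
      rw [abs_of_nonneg (by linarith [hx.1] : (0:ℝ) ≤ x - c)]; ring
    rw [e1, e2]
    linarith
  -- the analytic part
  have hGint : ∀ u u' : ℝ, IntervalIntegrable G volume u u' := fun u u' =>
    combG_intervalIntegrable a L w hv0.le u u'
  have hGnn : ∀ x, 0 ≤ G x := combG_nonneg a L w hv0.le
  set q : ℝ → ℝ := fun t => ∫ x in (c - t)..(c + t), G x with hqdef
  have hqmono : Monotone q := by
    intro s t hst
    have h1 : (∫ x in (c - t)..(c - s), G x) + (∫ x in (c - s)..(c + s), G x)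
        + (∫ x in (c + s)..(c + t), G x) = q t := by
      rw [intervalIntegral.integral_add_adjacent_intervals (hGint _ _) (hGint _ _),
          intervalIntegral.integral_add_adjacent_intervals (hGint _ _) (hGint _ _)]
    have h2 : 0 ≤ ∫ x in (c - t)..(c - s), G x :=
      intervalIntegral.integral_nonneg (by linarith) fun x _ => hGnn x
    have h3 : 0 ≤ ∫ x in (c + s)..(c + t), G x :=
      intervalIntegral.integral_nonneg (by linarith) fun x _ => hGnn x
    have h4 : q s = ∫ x in (c - s)..(c + s), G x := rfl
    rw [h4]
    linarith
  have hper : ∀ s : ℝ, ∫ x in s..(s + L), G x = 1 / (N : ℝ) := by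
    intro s
    rw [hGdef, combG_integral_period v hL0 hw (le_of_lt hwN), hvw]
  have hqid : ∀ t : ℝ, q t + q (L - t) = 2 / (N : ℝ) := by
    intro t
    have e1 : (∫ x in (c - t)..(c + t), G x) + (∫ x in (c + t)..((c - t) + L), G x)
        = 1 / (N : ℝ) := by
      rw [intervalIntegral.integral_add_adjacent_intervals (hGint _ _) (hGint _ _)]
      exact hper (c - t)
    have e2 : (∫ x in (c - (L - t))..(c + t), G x) + (∫ x in (c + t)..(c + (L - t)), G x)
        = q (L - t) := by
      rw [intervalIntegral.integral_add_adjacent_intervals (hGint _ _) (hGint _ _)]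
    have e3 : (∫ x in (c - (L - t))..(c + t), G x) = 1 / (N : ℝ) := by
      have he : c + t = (c - (L - t)) + L := by ring
      rw [he]; exact hper _
    have e4 : (∫ x in (c + t)..((c - t) + L), G x) = ∫ x in (c + t)..(c + (L - t)), G x := by
      have he : (c - t) + L = c + (L - t) := by ring
      rw [he]
    have h4 : q t = ∫ x in (c - t)..(c + t), G x := rfl
    rw [h4]
    linear_combination e1 - e2 + e3 - e4
  have hqLN : ∫ t in (0:ℝ)..L, q t = L / N := by
    have hq1 : IntervalIntegrable q volume 0 L := hqmono.intervalIntegrable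
    have hanti : Antitone fun t => q (L - t) := fun s t hst => hqmono (by linarith)
    have hq2 : IntervalIntegrable (fun t => q (L - t)) volume 0 L := hanti.intervalIntegrable
    have hrefl : ∫ t in (0:ℝ)..L, q (L - t) = ∫ t in (0:ℝ)..L, q t := by
      rw [intervalIntegral.integral_comp_sub_left q L]
      norm_num
    have hsum : ∫ t in (0:ℝ)..L, (q t + q (L - t)) = L * (2 / N) := by
      rw [intervalIntegral.integral_congr (g := fun _ => 2 / (N : ℝ)) fun t _ => hqid t]
      rw [intervalIntegral.integral_const, smul_eq_mul]
      ring
    rw [intervalIntegral.integral_add hq1 hq2, hrefl] at hsum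
    have : L * (2 / N) = 2 * (L / N) := by ring
    linarith [hsum, this]
  have habs_meas : Measurable fun x : ℝ => |x - c| := (measurable_id.sub measurable_const).abs
  have hlc : ∫⁻ x in I, ENNReal.ofReal |x - c| ∂ν
      = ∫⁻ t in Set.Ioi (0:ℝ), (ν.restrict I) {x | t < |x - c|} := by
    exact lintegral_eq_lintegral_meas_lt (ν.restrict I)
      (Filter.Eventually.of_forall fun x => abs_nonneg _) habs_meas.aemeasurable
  have hbound : ∀ t ∈ Set.Ioc (0:ℝ) L,
      ν I - ENNReal.ofReal (q t) ≤ (ν.restrict I) {x | t < |x - c|} := by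
    intro t ht
    have hA : MeasurableSet {x : ℝ | t < |x - c|} :=
      measurableSet_lt measurable_const habs_meas
    rw [Measure.restrict_apply hA]
    have hcover : I ⊆ ({x : ℝ | t < |x - c|} ∩ I) ∪ Set.Icc (c - t) (c + t) := by
      intro x hx
      by_cases h : t < |x - c|
      · exact Or.inl ⟨h, hx⟩
      · push_neg at h
        have h1 := (abs_le.1 h).1
        have h2 := (abs_le.1 h).2
        exact Or.inr ⟨by linarith, by linarith⟩
    have h1 : ν I ≤ ν ({x : ℝ | t < |x - c|} ∩ I) + ν (Set.Icc (c - t) (c + t)) :=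
      le_trans (measure_mono hcover) (measure_union_le _ _)
    have hGIcc : IntegrableOn G (Set.Icc (c - t) (c + t)) volume := by
      apply Integrable.mono' (g := fun _ => v)
        (integrableOn_const measure_Icc_lt_top.ne)
        (combG_measurable a L w v).aestronglyMeasurable
      filter_upwards with x
      rw [Real.norm_eq_abs, abs_of_nonneg (hGnn x)]
      exact combG_le a L w hv0.le x
    have h2 : ν (Set.Icc (c - t) (c + t)) ≤ ENNReal.ofReal (q t) := by
      rw [hlaw, withDensity_apply _ measurableSet_Icc]
      have hle : ∫⁻ x in Set.Icc (c - t) (c + t), ENNReal.ofReal (combDensity a b N w x)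
          ≤ ∫⁻ x in Set.Icc (c - t) (c + t), ENNReal.ofReal (G x) :=
        lintegral_mono fun x =>
          ENNReal.ofReal_le_ofReal (combDensity_le_combG hw hL0 (le_of_lt hwN) x)
      refine le_trans hle ?_
      have heq : ∫⁻ x in Set.Icc (c - t) (c + t), ENNReal.ofReal (G x)
          = ENNReal.ofReal (∫ x in Set.Icc (c - t) (c + t), G x) := by
        rw [← ofReal_integral_eq_lintegral_ofReal hGIcc
          (Filter.Eventually.of_forall fun x => hGnn x)]
      rw [heq]
      apply ENNReal.ofReal_le_ofReal
      rw [MeasureTheory.integral_Icc_eq_integral_Ioc,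
        ← intervalIntegral.integral_of_le (by linarith [ht.1] : c - t ≤ c + t)]
    calc ν I - ENNReal.ofReal (q t)
        ≤ (ν ({x : ℝ | t < |x - c|} ∩ I) + ENNReal.ofReal (q t)) - ENNReal.ofReal (q t) := by
          apply tsub_le_tsub_right
          exact le_trans h1 (add_le_add le_rfl h2)
      _ ≤ ν ({x : ℝ | t < |x - c|} ∩ I) := by
          rw [ENNReal.add_sub_cancel_right ENNReal.ofReal_ne_top]
  have hqmeas : Measurable fun t => ENNReal.ofReal (q t) :=
    ENNReal.measurable_ofReal.comp hqmono.measurable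
  have hqlint : ∫⁻ t in Set.Ioc (0:ℝ) L, ENNReal.ofReal (q t) = ENNReal.ofReal (L / N) := by
    have hqint : IntegrableOn q (Set.Ioc (0:ℝ) L) volume :=
      (intervalIntegrable_iff_integrableOn_Ioc_of_le hL0.le).1 hqmono.intervalIntegrable
    have hqnn : 0 ≤ᵐ[volume.restrict (Set.Ioc (0:ℝ) L)] q := by
      refine (ae_restrict_iff' measurableSet_Ioc).2 (Filter.Eventually.of_forall fun t ht => ?_)
      exact intervalIntegral.integral_nonneg (by linarith [ht.1]) fun x _ => hGnn x
    rw [← ofReal_integral_eq_lintegral_ofReal hqint hqnn]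
    congr 1
    rw [← hqLN, intervalIntegral.integral_of_le hL0.le]
  have hconst : ∫⁻ _ in Set.Ioc (0:ℝ) L, ν I = ν I * ENNReal.ofReal L := by
    rw [lintegral_const, Measure.restrict_apply_univ, Real.volume_Ioc]
    norm_num
  have hchain : ENNReal.ofReal (L / N) ≤ ∫⁻ x in I, ENNReal.ofReal |x - c| ∂ν := by
    rw [hlc]
    have step1 : ∫⁻ t in Set.Ioc (0:ℝ) L, (ν I - ENNReal.ofReal (q t))
        ≤ ∫⁻ t in Set.Ioi (0:ℝ), (ν.restrict I) {x | t < |x - c|} := by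
      refine le_trans (setLIntegral_mono_ae' measurableSet_Ioc
        (Filter.Eventually.of_forall hbound)) ?_
      exact lintegral_mono_set Set.Ioc_subset_Ioi_self
    refine le_trans ?_ step1
    have hsub_ge : ∫⁻ _ in Set.Ioc (0:ℝ) L, ν I
        ≤ (∫⁻ t in Set.Ioc (0:ℝ) L, (ν I - ENNReal.ofReal (q t)))
          + ∫⁻ t in Set.Ioc (0:ℝ) L, ENNReal.ofReal (q t) := by
      rw [← lintegral_add_right _ hqmeas]
      exact lintegral_mono fun t => le_tsub_add
    rw [hconst, hqlint] at hsub_ge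
    have h2NL : ENNReal.ofReal (2 / (N : ℝ)) * ENNReal.ofReal L ≤ ν I * ENNReal.ofReal L :=
      mul_le_mul_left hpI _
    have hOf : ENNReal.ofReal (2 / (N : ℝ)) * ENNReal.ofReal L
        = ENNReal.ofReal (L / N) + ENNReal.ofReal (L / N) := by
      rw [← ENNReal.ofReal_mul (by positivity), ← ENNReal.ofReal_add (by positivity) (by positivity)]
      congr 1
      field_simp
      ring
    have hfinal := le_trans (hOf ▸ h2NL) hsub_ge
    exact (ENNReal.add_le_add_iff_right ENNReal.ofReal_ne_top).1 hfinal
  have hfin : ∫⁻ x in I, ENNReal.ofReal |x - c| ∂ν ≠ ⊤ := by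
    have hb1 : ∫⁻ x in I, ENNReal.ofReal |x - c| ∂ν ≤ ∫⁻ _ in I, ENNReal.ofReal (b - a) ∂ν := by
      refine setLIntegral_mono_ae' hIm (Filter.Eventually.of_forall fun x hx => ?_)
      apply ENNReal.ofReal_le_ofReal
      obtain ⟨h1, h2⟩ := hx
      rw [abs_le]
      constructor <;> linarith
    have hb2 : ∫⁻ _ in I, ENNReal.ofReal (b - a) ∂ν = ENNReal.ofReal (b - a) * ν I := by
      rw [lintegral_const, Measure.restrict_apply_univ]
    refine ne_top_of_le_ne_top ?_ (le_trans hb1 (le_of_eq hb2))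
    exact ENNReal.mul_ne_top ENNReal.ofReal_ne_top hνI_ne
  have hreal : ∫ x in I, |x - c| ∂ν = (∫⁻ x in I, ENNReal.ofReal |x - c| ∂ν).toReal :=
    integral_eq_lintegral_of_nonneg_ae (Filter.Eventually.of_forall fun x => abs_nonneg _)
      habs_meas.aestronglyMeasurable
  have hLNle : L / N ≤ ∫ x in I, |x - c| ∂ν := by
    rw [hreal]
    calc L / N = (ENNReal.ofReal (L / N)).toReal := (ENNReal.toReal_ofReal (div_nonneg hL0.le hNR.le)).symm
      _ ≤ _ := ENNReal.toReal_mono hfin hchain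
  have hfinε : (b - a) / (2 * (N : ℝ) ^ 2) = L / N / 2 := by
    rw [hLdef, div_div, div_div]
    congr 1
    ring
  rw [h2D] at hLNle
  linarith
end

section
/- Let N be a positive integer, ε > 0 with ε < W/(2N²) where W = b − a, and 0 < w < W/N, and let X be the continuous random variable whose law has density p(x) = 1/(Nw) on ⋃_{k=1}^{N} (x_k − w, x_k] with x_k = a + kW/N and p(x) = 0 elsewhere. Then every partition (I_1, …, I_m) of (a, b] into consecutive half-open intervals such that Δ_X(I_j) ≤ ε for every j with P(X ∈ I_j) > 0 must satisfy m > N/2. -/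
open MeasureTheory

lemma max_zero_eq (x : ℝ) : max x 0 = (x + |x|) / 2 := by
  rcases le_total x 0 with h | h
  · rw [max_eq_right h, abs_of_nonpos h]; ring
  · rw [max_eq_left h, abs_of_nonneg h]; ring

lemma delta_ge {Ω : Type*} [MeasurableSpace Ω] (P : Measure Ω) [IsProbabilityMeasure P]
    (X : Ω → ℝ) (hX : Integrable X P) (hXm : Measurable X)
    (u v : ℝ) (S1 S2 : Set ℝ) (hS1 : MeasurableSet S1) (hS2 : MeasurableSet S2)
    (hd : Disjoint S1 S2) (h1 : S1 ⊆ Set.Ioc u v) (h2 : S2 ⊆ Set.Ioc u v)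
    (ρ c1 c2 D : ℝ) (hρ : 0 < ρ)
    (hm1 : (P {ω | X ω ∈ S1}).toReal = ρ) (hm2 : (P {ω | X ω ∈ S2}).toReal = ρ)
    (hi1 : ∫ ω in {ω | X ω ∈ S1}, X ω ∂P = ρ * c1)
    (hi2 : ∫ ω in {ω | X ω ∈ S2}, X ω ∂P = ρ * c2)
    (hD : D ≤ c2 - c1) :
    ρ * D / 2 ≤ Delta P X u v := by
  set I : Set Ω := {ω | X ω ∈ Set.Ioc u v} with hIdef
  have hImeas : MeasurableSet I := hXm measurableSet_Ioc
  have hA1 : MeasurableSet {ω | X ω ∈ S1} := hXm hS1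
  have hA2 : MeasurableSet {ω | X ω ∈ S2} := hXm hS2
  have hsub1 : {ω | X ω ∈ S1} ⊆ I := fun ω h => h1 h
  have hsub2 : {ω | X ω ∈ S2} ⊆ I := fun ω h => h2 h
  have hPI_ne_top : P I ≠ ⊤ := measure_ne_top P I
  have hPIpos : 0 < (P I).toReal := by
    have h := ENNReal.toReal_mono hPI_ne_top (measure_mono hsub1)
    rw [hm1] at h; linarith
  set q := (P I).toReal with hqdef
  set μ := intervalMean P X u v with hμ
  have hμdef : μ = (∫ ω in I, X ω ∂P) / q := rfl
  have hq : q ≠ 0 := ne_of_gt hPIpos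
  have hint : IntegrableOn X I P := hX.integrableOn
  have hconst : ∀ (c : ℝ) (S : Set Ω), IntegrableOn (fun _ => c) S P :=
    fun c S => integrableOn_const (measure_ne_top P S)
  have hIv : ∫ ω in I, X ω ∂P = q * μ := by
    rw [hμdef]; field_simp
  have hμv : μ ≤ v := by
    rw [hμdef, div_le_iff₀ hPIpos]
    calc ∫ ω in I, X ω ∂P ≤ ∫ _ω in I, v ∂P :=
          setIntegral_mono_on hint (hconst v I) hImeas (fun ω hω => hω.2)
      _ = q * v := by rw [setIntegral_const, smul_eq_mul, measureReal_def]
      _ = v * q := by ring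
  have hmean : ∫ ω in I, (μ - X ω) ∂P = 0 := by
    rw [integral_sub (hconst μ I) hint, setIntegral_const, smul_eq_mul, hIv]
    change q * μ - q * μ = 0
    ring
  have hDelta : Delta P X u v = ∫ ω in I, max (μ - X ω) 0 ∂P := by
    rw [Delta,
      ← integral_indicator (s := {ω | X ω ∈ Set.Ioc u (intervalMean P X u v)})
        (hXm measurableSet_Ioc),
      ← integral_indicator (s := I) hImeas]
    congr 1; funext ω
    by_cases h : ω ∈ {ω | X ω ∈ Set.Ioc u μ}
    · have hIω : ω ∈ I := ⟨h.1, h.2.trans hμv⟩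
      rw [Set.indicator_of_mem h, Set.indicator_of_mem hIω,
        max_eq_left (by simp only [Set.mem_setOf_eq, Set.mem_Ioc] at h; linarith [h.2])]
    · by_cases h' : ω ∈ I
      · rw [Set.indicator_of_notMem h, Set.indicator_of_mem h']
        have hu : u < X ω := h'.1
        have : μ < X ω := by
          by_contra hc
          exact h ⟨hu, not_lt.mp hc⟩
        rw [max_eq_right (by linarith)]
      · rw [Set.indicator_of_notMem h, Set.indicator_of_notMem h']
  have hsubint : IntegrableOn (fun ω => μ - X ω) I P := ((integrable_const μ).sub hX).integrableOn
  have habs_int : IntegrableOn (fun ω => |μ - X ω|) I P :=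
    ((integrable_const μ).sub hX).abs.integrableOn
  have hDelta2 : Delta P X u v = (∫ ω in I, |μ - X ω| ∂P) / 2 := by
    rw [hDelta]
    have : ∀ ω, max (μ - X ω) 0 = ((μ - X ω) + |μ - X ω|) / 2 := fun ω => max_zero_eq _
    simp_rw [this]
    rw [integral_div, integral_add hsubint habs_int, hmean, zero_add]
  have hd' : Disjoint {ω | X ω ∈ S1} {ω | X ω ∈ S2} := by
    apply Set.disjoint_left.mpr
    intro ω hω1 hω2
    exact Set.disjoint_left.mp hd hω1 hω2
  have step1 : ∫ ω in {ω | X ω ∈ S1}, |μ - X ω| ∂P + ∫ ω in {ω | X ω ∈ S2}, |μ - X ω| ∂P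
      ≤ ∫ ω in I, |μ - X ω| ∂P := by
    rw [← setIntegral_union hd' hA2 (habs_int.mono_set hsub1) (habs_int.mono_set hsub2)]
    apply setIntegral_mono_set habs_int
    · exact Filter.Eventually.of_forall (fun ω => abs_nonneg _)
    · exact Filter.Eventually.of_forall (Set.union_subset hsub1 hsub2)
  have key : ∀ S : Set Ω, MeasurableSet S → (P S).toReal = ρ →
      ∀ c : ℝ, (∫ ω in S, X ω ∂P = ρ * c) →
      ρ * |μ - c| ≤ ∫ ω in S, |μ - X ω| ∂P := by
    intro S hSm hSρ c hSc
    have heq : ∫ ω in S, (μ - X ω) ∂P = ρ * (μ - c) := by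
      rw [integral_sub (hconst μ S) hX.integrableOn, setIntegral_const, smul_eq_mul, measureReal_def, hSρ, hSc]
      ring
    calc ρ * |μ - c| = |∫ ω in S, (μ - X ω) ∂P| := by
          rw [heq, abs_mul, abs_of_nonneg hρ.le]
      _ ≤ ∫ ω in S, |μ - X ω| ∂P := by
          simpa [Real.norm_eq_abs] using
            norm_integral_le_integral_norm (μ := P.restrict S) (fun ω => μ - X ω)
  have k1 := key _ hA1 hm1 c1 hi1
  have k2 := key _ hA2 hm2 c2 hi2
  have habs : D ≤ |μ - c1| + |μ - c2| := by
    rcases abs_cases (μ - c1) with ⟨e1, _⟩ | ⟨e1, _⟩ <;>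
      rcases abs_cases (μ - c2) with ⟨e2, _⟩ | ⟨e2, _⟩ <;> linarith
  rw [hDelta2]
  have : ρ * D ≤ ρ * (|μ - c1| + |μ - c2|) := mul_le_mul_of_nonneg_left habs hρ.le
  linarith

lemma comb_measurable (a b : ℝ) (N : ℕ) (w : ℝ) :
    Measurable (combDensity a b N w) := by
  apply Measurable.indicator measurable_const
  exact MeasurableSet.biUnion (Set.to_countable _) (fun k _ => measurableSet_Ioc)

lemma comb_mem (a b : ℝ) (N : ℕ) (w : ℝ) (k : ℕ) (hk : k ∈ Finset.Icc 1 N)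
    {x : ℝ} (hx : x ∈ Set.Ioc (a + (k : ℝ) * (b - a) / N - w) (a + (k : ℝ) * (b - a) / N)) :
    combDensity a b N w x = 1 / ((N : ℝ) * w) := by
  rw [combDensity, Set.indicator_of_mem]
  exact Set.mem_iUnion₂.mpr ⟨k, hk, hx⟩

lemma tooth_mass {Ω : Type*} [MeasurableSpace Ω] (P : Measure Ω) (X : Ω → ℝ)
    (hXm : Measurable X) (a b : ℝ) (N : ℕ) (hN : 0 < N) (w : ℝ) (hw : 0 < w)
    (hlaw : P.map X =
      volume.withDensity (fun x => ENNReal.ofReal (combDensity a b N w x)))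
    (k : ℕ) (hk : k ∈ Finset.Icc 1 N) :
    P {ω | X ω ∈ Set.Ioc (a + (k : ℝ) * (b - a) / N - w) (a + (k : ℝ) * (b - a) / N)}
      = ENNReal.ofReal (1 / (N : ℝ)) := by
  have hS : MeasurableSet (Set.Ioc (a + (k : ℝ) * (b - a) / N - w)
      (a + (k : ℝ) * (b - a) / N)) := measurableSet_Ioc
  rw [show {ω | X ω ∈ Set.Ioc (a + (k : ℝ) * (b - a) / N - w) (a + (k : ℝ) * (b - a) / N)}
      = X ⁻¹' Set.Ioc (a + (k : ℝ) * (b - a) / N - w) (a + (k : ℝ) * (b - a) / N) from rfl,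
    ← Measure.map_apply hXm hS, hlaw, withDensity_apply _ hS]
  rw [setLIntegral_congr_fun hS
    (fun x hx => by rw [comb_mem a b N w k hk hx])]
  rw [setLIntegral_const, Real.volume_Ioc, ← ENNReal.ofReal_mul (by positivity)]
  congr 1
  have hN' : (N : ℝ) ≠ 0 := Nat.cast_ne_zero.mpr hN.ne'
  field_simp
  ring

lemma tooth_integral {Ω : Type*} [MeasurableSpace Ω] (P : Measure Ω) (X : Ω → ℝ)
    (hXm : Measurable X) (a b : ℝ) (N : ℕ) (hN : 0 < N) (w : ℝ) (hw : 0 < w)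
    (hlaw : P.map X =
      volume.withDensity (fun x => ENNReal.ofReal (combDensity a b N w x)))
    (k : ℕ) (hk : k ∈ Finset.Icc 1 N) :
    ∫ ω in {ω | X ω ∈ Set.Ioc (a + (k : ℝ) * (b - a) / N - w) (a + (k : ℝ) * (b - a) / N)},
      X ω ∂P = (1 / (N : ℝ)) * ((a + (k : ℝ) * (b - a) / N) - w / 2) := by
  set xk := a + (k : ℝ) * (b - a) / N with hxk
  have hS : MeasurableSet (Set.Ioc (xk - w) xk) := measurableSet_Ioc
  have hmap := setIntegral_map (μ := P) (g := X) (f := fun y => y) hS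
    measurable_id.aestronglyMeasurable hXm.aemeasurable
  rw [show {ω | X ω ∈ Set.Ioc (xk - w) xk} = X ⁻¹' Set.Ioc (xk - w) xk from rfl, ← hmap, hlaw]
  rw [show (fun x => ENNReal.ofReal (combDensity a b N w x))
      = (fun x => ((Real.toNNReal (combDensity a b N w x) : NNReal) : ENNReal)) from rfl]
  rw [setIntegral_withDensity_eq_setIntegral_smul
    ((comb_measurable a b N w).real_toNNReal) _ hS]
  have hcongr : Set.EqOn (fun y => (Real.toNNReal (combDensity a b N w y)) • y)
      (fun y => (1 / ((N : ℝ) * w)) * y) (Set.Ioc (xk - w) xk) := by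
    intro y hy
    simp only [NNReal.smul_def, smul_eq_mul]
    rw [comb_mem a b N w k hk hy, Real.coe_toNNReal _ (by positivity)]
  rw [setIntegral_congr_fun hS hcongr]
  have hle : xk - w ≤ xk := by linarith
  rw [MeasureTheory.integral_const_mul, ← intervalIntegral.integral_of_le hle, integral_id]
  have hN' : (N : ℝ) ≠ 0 := Nat.cast_ne_zero.mpr hN.ne'
  field_simp
  ring

lemma find_index (m : ℕ) (r : ℕ → ℝ) (x : ℝ) (hx0 : r 0 < x) (hxm : x ≤ r m) :
    ∃ j, 1 ≤ j ∧ j ≤ m ∧ r (j - 1) < x ∧ x ≤ r j := by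
  classical
  have hex : ∃ j, x ≤ r j := ⟨m, hxm⟩
  set j := Nat.find hex with hj
  have hjspec : x ≤ r j := Nat.find_spec hex
  have hj1 : 1 ≤ j := by
    rcases Nat.eq_zero_or_pos j with h | h
    · rw [h] at hjspec; linarith
    · exact h
  have hjm : j ≤ m := Nat.find_min' hex hxm
  refine ⟨j, hj1, hjm, not_le.mp (Nat.find_min hex (by omega)), hjspec⟩

/-- Let `N ≥ 1`, `0 < ε < W/(2N²)` with `W = b − a`, `0 < w < W/N`,
and let `X` be the continuous random variable whose law has density `combDensity a b N w`
with respect to Lebesgue measure. Then every partition `(I_1,…,I_m)` of `(a, b]` into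
consecutive half-open intervals `I_j = (r (j−1), r j]` with `Δ_X(I_j) ≤ ε` for every `j`
with `P(X ∈ I_j) > 0` must satisfy `m > N/2`. -/
theorem lower_bound_continuous_partition {Ω : Type*} [MeasurableSpace Ω]
    (P : Measure Ω) [IsProbabilityMeasure P]
    (X : Ω → ℝ) (hX : Integrable X P) (hXm : Measurable X)
    (a b : ℝ) (hab : a < b)
    (N : ℕ) (hN : 0 < N)
    (ε : ℝ) (hε : 0 < ε) (hεW : ε < (b - a) / (2 * (N : ℝ) ^ 2))
    (w : ℝ) (hw : 0 < w) (hwN : w < (b - a) / N)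
    (hlaw : P.map X =
      volume.withDensity (fun x => ENNReal.ofReal (combDensity a b N w x)))
    (m : ℕ) (hm : 1 ≤ m)
    (r : ℕ → ℝ) (hr0 : r 0 = a) (hrm : r m = b)
    (hrmono : ∀ i < m, r i < r (i + 1))
    (hrerr : ∀ j, 1 ≤ j → j ≤ m →
      0 < P {ω | X ω ∈ Set.Ioc (r (j - 1)) (r j)} →
      Delta P X (r (j - 1)) (r j) ≤ ε) :
    (N : ℝ) / 2 < (m : ℝ) := by
  classical
  have hNR : (0 : ℝ) < N := Nat.cast_pos.mpr hN
  set W := b - a with hW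
  have hWpos : 0 < W := by rw [hW]; linarith
  clear_value W
  set xk : ℕ → ℝ := fun k => a + (k : ℝ) * W / N with hxk
  have hxkeq : ∀ k : ℕ, xk k = a + (k : ℝ) * (b - a) / N := by
    intro k; simp only [hxk]; rw [hW]
  have hgap : ∀ k1 k2 : ℕ, k1 < k2 → xk k1 + W / N ≤ xk k2 := by
    intro k1 k2 h
    simp only [hxk]
    have hc : (k1 : ℝ) + 1 ≤ (k2 : ℝ) := by exact_mod_cast h
    have h2 : ((k1 : ℝ) + 1) * (W / N) ≤ (k2 : ℝ) * (W / N) :=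
      mul_le_mul_of_nonneg_right hc (le_of_lt (div_pos hWpos hNR))
    have e1 : (k1 : ℝ) * W / N + W / N = ((k1 : ℝ) + 1) * (W / N) := by ring
    have e2 : (k2 : ℝ) * W / N = (k2 : ℝ) * (W / N) := by ring
    linarith [h2]
  clear_value xk
  have hx0 : xk 0 = a := by rw [hxkeq]; simp
  -- tooth k is inside (a, b]
  have htooth_mem : ∀ k ∈ Finset.Icc 1 N, a < xk k - w ∧ xk k ≤ b := by
    intro k hk
    rw [Finset.mem_Icc] at hk
    constructor
    · have h1 : xk 0 + W / N ≤ xk k := hgap 0 k hk.1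
      linarith [hx0]
    · have hkN : (k : ℝ) ≤ N := by exact_mod_cast hk.2
      have h2 : (k : ℝ) * (b - a) / N ≤ b - a := by
        rw [div_le_iff₀ hNR]
        have := mul_le_mul_of_nonneg_right hkN (by linarith : (0:ℝ) ≤ b - a)
        linarith [this]
      rw [hxkeq]; linarith
  -- choose interval index for each tooth
  have hchoice : ∀ k : ℕ, ∃ j, k ∈ Finset.Icc 1 N →
      (1 ≤ j ∧ j ≤ m ∧ r (j - 1) < xk k ∧ xk k ≤ r j) := by
    intro k
    by_cases hk : k ∈ Finset.Icc 1 N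
    · obtain ⟨j, hj⟩ := find_index m r (xk k)
        (by rw [hr0]; linarith [(htooth_mem k hk).1, hw])
        (by rw [hrm]; exact (htooth_mem k hk).2)
      exact ⟨j, fun _ => hj⟩
    · exact ⟨0, fun h => absurd h hk⟩
  choose f hf using hchoice
  set S := Finset.Icc 1 N with hS
  set C : ℕ → Prop := fun k => xk k - w < r (f k - 1) with hC
  -- cut teeth
  have hcut : (S.filter C).card ≤ m - 1 := by
    have hcard : (Finset.Icc 1 (m - 1)).card = m - 1 := by rw [Nat.card_Icc]; omega
    rw [← hcard]
    apply Finset.card_le_card_of_injOn (fun k => f k - 1)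
    · intro k hk
      rw [Finset.mem_coe, Finset.mem_filter] at hk
      obtain ⟨hkS, hkC⟩ := hk
      simp only [hC] at hkC
      obtain ⟨hf1, hfm, hfl, hfr⟩ := hf k hkS
      simp only [Finset.mem_coe, Finset.mem_Icc]
      constructor
      · by_contra h
        have h0 : f k - 1 = 0 := by omega
        rw [h0, hr0] at hkC
        have := (htooth_mem k hkS).1
        linarith
      · omega
    · intro k1 hk1 k2 hk2 he
      by_contra hne
      rw [Finset.mem_coe, Finset.mem_filter] at hk1 hk2
      obtain ⟨hk1S, hk1C⟩ := hk1
      obtain ⟨hk2S, hk2C⟩ := hk2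
      simp only [hC] at hk1C hk2C
      obtain ⟨h11, h12, h13, h14⟩ := hf k1 hk1S
      obtain ⟨h21, h22, h23, h24⟩ := hf k2 hk2S
      have he' : f k1 - 1 = f k2 - 1 := he
      rcases lt_or_gt_of_ne hne with h | h
      · have hg := hgap k1 k2 h
        have h13' : r (f k2 - 1) < xk k1 := by rw [← he']; exact h13
        have : xk k2 - w < xk k1 := lt_trans hk2C h13'
        linarith
      · have hg := hgap k2 k1 h
        have h23' : r (f k1 - 1) < xk k2 := by rw [he']; exact h23
        have : xk k1 - w < xk k2 := lt_trans hk1C h23'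
        linarith
  -- uncut teeth
  have hunc : (S.filter (fun k => ¬ C k)).card ≤ m := by
    have hcard : (Finset.Icc 1 m).card = m := by rw [Nat.card_Icc]; omega
    rw [← hcard]
    apply Finset.card_le_card_of_injOn f
    · intro k hk
      rw [Finset.mem_coe, Finset.mem_filter] at hk
      obtain ⟨h1, h2, _, _⟩ := hf k hk.1
      simp only [Finset.mem_coe, Finset.mem_Icc]; exact ⟨h1, h2⟩
    · -- the heart: two uncut teeth in same interval is impossible
      intro k1 hk1 k2 hk2 he
      by_contra hne
      rw [Finset.mem_coe, Finset.mem_filter] at hk1 hk2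
      obtain ⟨hk1S, hk1C⟩ := hk1
      obtain ⟨hk2S, hk2C⟩ := hk2
      have main : ∀ p1 p2 : ℕ, p1 ∈ S → p2 ∈ S → ¬ C p1 → ¬ C p2 → p1 < p2 →
          f p1 = f p2 → False := by
        intro p1 p2 hp1S hp2S hp1C hp2C hlt hfe
        obtain ⟨h11, h12, h13, h14⟩ := hf p1 hp1S
        obtain ⟨h21, h22, h23, h24⟩ := hf p2 hp2S
        set j := f p1 with hj
        have hj2 : f p2 = j := hfe.symm
        simp only [hC, not_lt] at hp1C hp2C
        rw [hj2] at h23 h24 hp2C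
        -- teeth inside the interval (r (j-1), r j]
        have ht1 : Set.Ioc (xk p1 - w) (xk p1) ⊆ Set.Ioc (r (j - 1)) (r j) := by
          intro y hy
          exact ⟨lt_of_le_of_lt hp1C hy.1, hy.2.trans h14⟩
        have ht2 : Set.Ioc (xk p2 - w) (xk p2) ⊆ Set.Ioc (r (j - 1)) (r j) := by
          intro y hy
          exact ⟨lt_of_le_of_lt hp2C hy.1, hy.2.trans h24⟩
        have hg := hgap p1 p2 hlt
        have hdisj : Disjoint (Set.Ioc (xk p1 - w) (xk p1)) (Set.Ioc (xk p2 - w) (xk p2)) := by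
          apply Set.disjoint_left.mpr
          intro y hy1 hy2
          have hb1 : y ≤ xk p1 := hy1.2
          have hb2 : xk p2 - w < y := hy2.1
          linarith
        have hm1 := tooth_mass P X hXm a b N hN w hw hlaw p1 hp1S
        have hm2 := tooth_mass P X hXm a b N hN w hw hlaw p2 hp2S
        have hi1 := tooth_integral P X hXm a b N hN w hw hlaw p1 hp1S
        have hi2 := tooth_integral P X hXm a b N hN w hw hlaw p2 hp2S
        rw [← hxkeq p1] at hm1 hi1
        rw [← hxkeq p2] at hm2 hi2
        have hρpos : (0 : ℝ) < 1 / N := by positivity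
        have hdge := delta_ge P X hX hXm (r (j - 1)) (r j)
          (Set.Ioc (xk p1 - w) (xk p1)) (Set.Ioc (xk p2 - w) (xk p2))
          measurableSet_Ioc measurableSet_Ioc hdisj ht1 ht2
          (1 / N) (xk p1 - w / 2) (xk p2 - w / 2) (W / N) hρpos
          (by rw [hm1, ENNReal.toReal_ofReal (by positivity)])
          (by rw [hm2, ENNReal.toReal_ofReal (by positivity)])
          (by rw [hi1])
          (by rw [hi2])
          (by linarith)
        -- positivity of the interval mass
        have hpos : 0 < P {ω | X ω ∈ Set.Ioc (r (j - 1)) (r j)} := by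
          have hsub : {ω | X ω ∈ Set.Ioc (xk p1 - w) (xk p1)}
              ⊆ {ω | X ω ∈ Set.Ioc (r (j - 1)) (r j)} := fun ω h => ht1 h
          calc (0 : ENNReal) < ENNReal.ofReal (1 / N) := ENNReal.ofReal_pos.mpr hρpos
            _ = P {ω | X ω ∈ Set.Ioc (xk p1 - w) (xk p1)} := hm1.symm
            _ ≤ P {ω | X ω ∈ Set.Ioc (r (j - 1)) (r j)} := measure_mono hsub
        have herr := hrerr j h11 h12 hpos
        have hcontra : (1 : ℝ) / N * (W / N) / 2 = W / (2 * (N : ℝ) ^ 2) := by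
          rw [div_eq_div_iff (by positivity) (by positivity)]
          field_simp
        rw [hcontra] at hdge
        linarith
      rcases lt_or_gt_of_ne hne with h | h
      · exact main k1 k2 hk1S hk2S hk1C hk2C h he
      · exact main k2 k1 hk2S hk1S hk2C hk1C h he.symm
  -- combine
  have htotal : S.card = N := by rw [hS, Nat.card_Icc]; omega
  have hsplit : (S.filter C).card + (S.filter (fun k => ¬ C k)).card = S.card :=
    Finset.card_filter_add_card_filter_not C
  have hNle : N ≤ 2 * m - 1 := by omega
  have hNr : (N : ℝ) ≤ 2 * (m : ℝ) - 1 := by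
    have h2 : N + 1 ≤ 2 * m := by omega
    have : ((N : ℝ) + 1) ≤ 2 * (m : ℝ) := by exact_mod_cast h2
    linarith
  linarith
end
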